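/- Let r = [r_0,...,r_d] and x = [x_0,...,x_d] be strictly increasing sequences of nonnegative integers. The matrix T(r,x) with entries T(r,x)_{ij} = C(x_j, r_i) is invertible if and only if r_i ≤ x_i for every i = 0,...,d. -/

import Mathlib

lemma det_zero_of_lt {d : ℕ} (r x : Fin (d + 1) → ℕ)
    (hr : StrictMono r) (hx : StrictMono x) (i : Fin (d+1)) (h : x i < r i) :
    (Matrix.of fun i j : Fin (d + 1) => ((x j).choose (r i) : ℚ)).det = 0 := by
  rw [Matrix.det_apply]
  refine Finset.sum_eq_zero fun σ _ => ?_
  have : ∃ j, j ≤ i ∧ i ≤ σ j := by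
    by_contra hcon
    push_neg at hcon
    have hsub : ∀ j ∈ Finset.Iic i, σ j ∈ Finset.Iio i := by
      intro j hj
      simp only [Finset.mem_Iic] at hj
      simpa using hcon j hj
    have := Finset.card_le_card_of_injOn σ hsub (σ.injective.injOn)
    rw [Fin.card_Iic, Fin.card_Iio] at this
    omega
  obtain ⟨j, hj1, hj2⟩ := this
  have hz : ((x j).choose (r (σ j)) : ℚ) = 0 := by
    have : x j < r (σ j) := lt_of_le_of_lt (hx.monotone hj1) (lt_of_lt_of_le h (hr.monotone hj2))
    rw [Nat.choose_eq_zero_of_lt this]; norm_num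
  have : (∏ k : Fin (d+1), (Matrix.of fun i j : Fin (d + 1) => ((x j).choose (r i) : ℚ)) (σ k) k) = 0 :=
    Finset.prod_eq_zero (Finset.mem_univ j) (by simpa using hz)
  rw [this, smul_zero]

lemma det_pos_aux : ∀ (n : ℕ) {d : ℕ} (r x : Fin (d + 1) → ℕ),
    StrictMono r → StrictMono x → (∀ i, r i ≤ x i) → d + 1 + ∑ j, x j ≤ n →
    0 < (Matrix.of fun i j : Fin (d + 1) => ((x j).choose (r i) : ℚ)).det := by
  intro n
  induction n with
  | zero => intro d r x _ _ _ hn; omega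
  | succ n ih =>
    intro d r x hr hx hrx hn
    obtain _ | d := d
    · rw [Matrix.det_fin_one]
      have := Nat.choose_pos (hrx 0)
      simp only [Matrix.of_apply]
      exact_mod_cast this
    by_cases hx0 : x 0 = 0
    · -- column 0 is e_0; expand along it
      have hr0 : r 0 = 0 := by have := hrx 0; omega
      rw [Matrix.det_succ_column_zero]
      rw [Finset.sum_eq_single_of_mem 0 (Finset.mem_univ _)]
      · simp only [Matrix.of_apply, hx0, hr0, Nat.choose_self, Fin.val_zero, pow_zero,
          Nat.cast_one, one_mul, Fin.succAbove_zero]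
        refine ih (r ∘ Fin.succ) (x ∘ Fin.succ)
          (hr.comp (Fin.strictMono_succ)) (hx.comp (Fin.strictMono_succ))
          (fun i => hrx i.succ) ?_
        show d + 1 + ∑ j : Fin (d+1), x j.succ ≤ n
        have hsum : ∑ j : Fin (d+1+1), x j = x 0 + ∑ j : Fin (d+1), x j.succ :=
          Fin.sum_univ_succ x
        omega
      · intro i _ hi
        have : x 0 < r i := by
          have : r 0 < r i := hr (Fin.pos_of_ne_zero hi)
          omega
        simp [Matrix.of_apply, Nat.choose_eq_zero_of_lt this]
    · -- all x j ≥ 1 : split each row via Pascal's rule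
      have hx1 : ∀ j, 1 ≤ x j := by
        intro j
        have := hx.monotone (Fin.zero_le j)
        omega
      set A : Matrix (Fin (d+1+1)) (Fin (d+1+1)) ℚ :=
        Matrix.of fun i j => ((x j - 1).choose (r i) : ℚ) with hA
      set B : Matrix (Fin (d+1+1)) (Fin (d+1+1)) ℚ :=
        Matrix.of fun i j => if r i = 0 then 0 else ((x j - 1).choose (r i - 1) : ℚ) with hB
      have hM : (Matrix.of fun i j : Fin (d + 1 + 1) => ((x j).choose (r i) : ℚ)) = A + B := by
        ext i j
        simp only [Matrix.of_apply, Matrix.add_apply, hA, hB]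
        rcases Nat.eq_zero_or_pos (r i) with h0 | h0
        · simp [h0]
        · have hxj := hx1 j
          obtain ⟨k, hk⟩ := Nat.exists_eq_add_of_le h0
          obtain ⟨m, hm⟩ := Nat.exists_eq_add_of_le hxj
          rw [if_neg (by omega)]
          rw [show r i = k + 1 by omega, show x j = m + 1 by omega]
          simp only [Nat.add_sub_cancel, Nat.succ_sub_one]
          rw [Nat.choose_succ_succ]
          push_cast
          ring
      have expand : (A + B).det =
          ∑ s : Finset (Fin (d+1+1)), (Matrix.of (s.piecewise A B)).det :=
        Matrix.detRowAlternating.toMultilinearMap.map_add_univ A B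
      rw [hM, expand]
      have hsum1 : ∑ j : Fin (d+1+1), x j = ∑ j : Fin (d+1+1), (x j - 1) + (d + 1 + 1) := by
        have h1 : ∑ j : Fin (d+1+1), x j = ∑ j : Fin (d+1+1), ((x j - 1) + 1) :=
          Finset.sum_congr rfl fun j _ => by have := hx1 j; omega
        rw [h1, Finset.sum_add_distrib]
        simp
      have key : ∀ s : Finset (Fin (d+1+1)), (∀ i ∉ s, r i ≠ 0) →
          ∀ ρ : Fin (d+1+1) → ℕ, (∀ i, ρ i = if i ∈ s then r i else r i - 1) →
          Matrix.of (s.piecewise A B) = Matrix.of fun i j => ((x j - 1).choose (ρ i) : ℚ) := by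
        intro s hs ρ hρ
        ext i j
        by_cases hi : i ∈ s
        · simp [Finset.piecewise_eq_of_mem _ _ _ hi, Finset.piecewise, hA, hρ, hi]
        · simp [Finset.piecewise_eq_of_notMem _ _ _ hi, Finset.piecewise, hB, hρ, hi, hs i hi]
      have hxm : StrictMono (fun j : Fin (d+1+1) => x j - 1) := by
        intro a b hab
        have h5 := hx hab
        have h6 := hx1 a
        show x a - 1 < x b - 1
        omega
      have nonneg : ∀ s : Finset (Fin (d+1+1)), 0 ≤ (Matrix.of (s.piecewise A B)).det := by
        intro s
        by_cases hz : ∃ i, i ∉ s ∧ r i = 0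
        · obtain ⟨i, hi, hri⟩ := hz
          refine le_of_eq (Matrix.det_eq_zero_of_row_eq_zero i fun j => ?_).symm
          simp [Finset.piecewise_eq_of_notMem _ _ _ hi, Finset.piecewise, hB, hri, hi]
        · push_neg at hz
          obtain ⟨ρ, hρdef⟩ : ∃ ρ : Fin (d+1+1) → ℕ,
              ∀ i, ρ i = if i ∈ s then r i else r i - 1 := ⟨_, fun i => rfl⟩
          have hent := key s hz ρ hρdef
          by_cases hmono : StrictMono ρ
          · by_cases hle : ∀ i, ρ i ≤ x i - 1
            · refine le_of_lt ?_
              rw [hent]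
              refine ih ρ (fun j => x j - 1) hmono hxm hle ?_
              show d + 1 + 1 + ∑ j : Fin (d+1+1), (x j - 1) ≤ n
              omega
            · push_neg at hle
              obtain ⟨i, hi⟩ := hle
              rw [hent]
              exact le_of_eq (det_zero_of_lt ρ (fun j => x j - 1) hmono hxm i hi).symm
          · rw [StrictMono] at hmono
            push_neg at hmono
            obtain ⟨a, b, hab, hba⟩ := hmono
            have heq : ρ a = ρ b := by
              have h1 : r a < r b := hr hab
              have h2 : ρ a ≤ r a := by rw [hρdef]; split_ifs <;> omega
              have h3 : r b - 1 ≤ ρ b := by rw [hρdef]; split_ifs <;> omega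
              omega
            refine le_of_eq (Matrix.det_zero_of_row_eq (ne_of_lt hab) ?_).symm
            rw [hent]
            funext j
            simp [heq]
      -- the positive term
      set s₀ : Finset (Fin (d+1+1)) := Finset.univ.filter (fun i => r i < x i) with hs₀
      have hs₀mem : ∀ i, i ∈ s₀ ↔ r i < x i := by
        intro i; simp [hs₀]
      have h0 : ∀ i ∉ s₀, r i ≠ 0 := by
        intro i hi
        rw [hs₀mem] at hi
        have := hrx i
        have := hx1 i
        omega
      obtain ⟨ρ₀, hρ₀def⟩ : ∃ ρ₀ : Fin (d+1+1) → ℕ,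
          ∀ i, ρ₀ i = if i ∈ s₀ then r i else r i - 1 := ⟨_, fun i => rfl⟩
      have hρ₀eq : ∀ i, ρ₀ i = if r i < x i then r i else r i - 1 := by
        intro i
        rw [hρ₀def i]
        by_cases h : r i < x i
        · rw [if_pos ((hs₀mem i).mpr h), if_pos h]
        · rw [if_neg (fun hc => h ((hs₀mem i).mp hc)), if_neg h]
      have hρ₀le : ∀ i, ρ₀ i ≤ x i - 1 := by
        intro i
        rw [hρ₀eq i]
        have := hrx i
        split_ifs <;> omega
      have hρ₀mono : StrictMono ρ₀ := by
        intro a b hab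
        have h1 : r a < r b := hr hab
        have h2 : x a < x b := hx hab
        have h3 := hrx a
        have h4 := hrx b
        have h5 := hx1 a
        have h6 := hx1 b
        have ea : (r a < x a ∧ ρ₀ a = r a) ∨ (x a ≤ r a ∧ ρ₀ a = r a - 1) := by
          rw [hρ₀eq a]; split_ifs with h
          · exact Or.inl ⟨h, rfl⟩
          · exact Or.inr ⟨not_lt.mp h, rfl⟩
        have eb : (r b < x b ∧ ρ₀ b = r b) ∨ (x b ≤ r b ∧ ρ₀ b = r b - 1) := by
          rw [hρ₀eq b]; split_ifs with h
          · exact Or.inl ⟨h, rfl⟩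
          · exact Or.inr ⟨not_lt.mp h, rfl⟩
        rcases ea with ⟨ha, ea⟩ | ⟨ha, ea⟩ <;> rcases eb with ⟨hb, eb⟩ | ⟨hb, eb⟩ <;>
          rw [ea, eb] <;> omega
      have hpos : 0 < (Matrix.of (s₀.piecewise A B)).det := by
        rw [key s₀ h0 ρ₀ hρ₀def]
        refine ih ρ₀ (fun j => x j - 1) hρ₀mono hxm hρ₀le ?_
        show d + 1 + 1 + ∑ j : Fin (d+1+1), (x j - 1) ≤ n
        omega
      exact Finset.sum_pos' (fun s _ => nonneg s) ⟨s₀, Finset.mem_univ _, hpos⟩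

theorem stmt_4 {d : ℕ} (r x : Fin (d + 1) → ℕ)
    (hr : StrictMono r) (hx : StrictMono x) :
    IsUnit (Matrix.of fun i j : Fin (d + 1) => ((x j).choose (r i) : ℚ)) ↔
      ∀ i, r i ≤ x i := by
  rw [Matrix.isUnit_iff_isUnit_det, isUnit_iff_ne_zero]
  constructor
  · intro h
    by_contra hcon
    push_neg at hcon
    obtain ⟨i, hi⟩ := hcon
    exact h (det_zero_of_lt r x hr hx i hi)
  · intro h
    exact ne_of_gt (det_pos_aux (d + 1 + ∑ j, x j) r x hr hx h le_rfl)
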